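/- Suppose X(k+1) = (1-γ)W X(k) + γ 𝟙 x_ℓ(k)ᵀ with W doubly stochastic having second largest singular value σ ∈ (0,1), γ ∈ (0,1), and suppose the sequence x_ℓ(k) converges to a limit x* ∈ ℝ^d. Then every row x_i(k) of X(k) converges to x* as k → ∞. -/

import Mathlib

open Matrix Filter

attribute [local instance] Matrix.frobeniusNormedAddCommGroup
attribute [local instance] Matrix.frobeniusNormedSpace

/-- A scalar sequence satisfying `b (k+1) = c * b k + (1-c) * u k` with `u → L`
converges to `L` when `0 ≤ c < 1`. -/
lemma aux_tendsto (c L : ℝ) (hc0 : 0 ≤ c) (hc1 : c < 1) (b u : ℕ → ℝ)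
    (hrec : ∀ k, b (k + 1) = c * b k + (1 - c) * u k)
    (hu : Tendsto u atTop (nhds L)) : Tendsto b atTop (nhds L) := by
  rw [Metric.tendsto_atTop]
  intro ε hε
  have hε2 : 0 < ε / 2 := by linarith
  obtain ⟨N, hN⟩ := (Metric.tendsto_atTop.1 hu) (ε / 2) hε2
  have key : ∀ m, |b (N + m) - L| ≤ c ^ m * |b N - L| + ε / 2 := by
    intro m
    induction m with
    | zero => simp; linarith
    | succ m ih =>
      have h1 : b (N + m + 1) - L = c * (b (N + m) - L) + (1 - c) * (u (N + m) - L) := by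
        rw [hrec]; ring
      have h2 : |u (N + m) - L| ≤ ε / 2 :=
        le_of_lt (by simpa [Real.dist_eq] using hN (N + m) (Nat.le_add_right N m))
      calc |b (N + (m + 1)) - L| = |c * (b (N + m) - L) + (1 - c) * (u (N + m) - L)| := by
            rw [show N + (m + 1) = N + m + 1 from rfl, h1]
        _ ≤ c * |b (N + m) - L| + (1 - c) * |u (N + m) - L| := by
            have h3 := abs_add_le (c * (b (N + m) - L)) ((1 - c) * (u (N + m) - L))
            rwa [abs_mul, abs_mul, abs_of_nonneg hc0,
              abs_of_nonneg (by linarith : (0:ℝ) ≤ 1 - c)] at h3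
        _ ≤ c * (c ^ m * |b N - L| + ε / 2) + (1 - c) * (ε / 2) := by
            have h4 : 0 ≤ c * |b (N + m) - L| - c * |b (N + m) - L| := by linarith
            nlinarith [mul_le_mul_of_nonneg_left ih hc0, h2, hc0]
        _ ≤ c ^ (m + 1) * |b N - L| + ε / 2 := le_of_eq (by ring)
  have hgeo : Tendsto (fun m => c ^ m * |b N - L|) atTop (nhds 0) := by
    simpa using (tendsto_pow_atTop_nhds_zero_of_lt_one hc0 hc1).mul_const |b N - L|
  obtain ⟨M, hM⟩ := (Metric.tendsto_atTop.1 hgeo) (ε / 2) hε2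
  refine ⟨N + M, fun k hk => ?_⟩
  have h4 : |b k - L| ≤ c ^ (k - N) * |b N - L| + ε / 2 := by
    have := key (k - N)
    rwa [Nat.add_sub_cancel' (by omega)] at this
  have h3 : c ^ (k - N) * |b N - L| < ε / 2 := by
    have := hM (k - N) (by omega)
    rwa [Real.dist_eq, sub_zero, abs_of_nonneg (by positivity)] at this
  rw [Real.dist_eq]
  calc |b k - L| ≤ c ^ (k - N) * |b N - L| + ε / 2 := h4
    _ < ε / 2 + ε / 2 := by linarith
    _ = ε := by ring

/-- Each entry of a matrix is bounded by its Frobenius norm. -/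
lemma entry_le_frobenius {m d : ℕ} (A : Matrix (Fin m) (Fin d) ℝ) (i : Fin m) (j : Fin d) :
    |A i j| ≤ ‖A‖ := by
  rw [Matrix.frobenius_norm_def, ← Real.sqrt_eq_rpow]
  have h1 : |A i j| = Real.sqrt (|A i j| ^ (2 : ℝ)) := by
    rw [Real.rpow_two, Real.sqrt_sq (abs_nonneg _)]
  rw [h1]
  apply Real.sqrt_le_sqrt
  calc (|A i j| ^ (2 : ℝ)) = ‖A i j‖ ^ (2 : ℝ) := by rw [Real.norm_eq_abs]
    _ ≤ ∑ j', ‖A i j'‖ ^ (2 : ℝ) :=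
        Finset.single_le_sum (f := fun j' => ‖A i j'‖ ^ (2 : ℝ))
          (fun j' _ => by positivity) (Finset.mem_univ j)
    _ ≤ ∑ i', ∑ j', ‖A i' j'‖ ^ (2 : ℝ) :=
        Finset.single_le_sum (f := fun i' => ∑ j', ‖A i' j'‖ ^ (2 : ℝ))
          (fun i' _ => by positivity) (Finset.mem_univ i)

/-- if the leader signal `x_ℓ(k)` converges to `x*`, then every
follower state (row of `X(k)`) converges to `x*`. -/
theorem stmt_16 (n d : ℕ) (hn : 0 < n) (γ σ : ℝ)
    (hγ : γ ∈ Set.Ioo (0 : ℝ) 1) (hσ : σ ∈ Set.Ioo (0 : ℝ) 1)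
    (W : Matrix (Fin n) (Fin n) ℝ) (hW : W ∈ doublyStochastic ℝ (Fin n))
    (hσW : ∀ Y : Matrix (Fin n) (Fin d) ℝ, (∀ j, (∑ i, Y i j) = 0) → ‖W * Y‖ ≤ σ * ‖Y‖)
    (X : ℕ → Matrix (Fin n) (Fin d) ℝ) (xl : ℕ → EuclideanSpace ℝ (Fin d))
    (xstar : EuclideanSpace ℝ (Fin d))
    (hdyn : ∀ k, X (k + 1) = (1 - γ) • (W * X k) + γ • Matrix.of (fun _ j => xl k j))
    (hconv : Tendsto xl atTop (nhds xstar)) :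
    ∀ i : Fin n,
      Tendsto (fun k => (WithLp.toLp 2 (fun j => X k i j) : EuclideanSpace ℝ (Fin d))) atTop
        (nhds xstar) := by
  obtain ⟨hγ0, hγ1⟩ := hγ
  obtain ⟨hσ0, hσ1⟩ := hσ
  have hrow : ∀ i, ∑ j, W i j = 1 := sum_row_of_mem_doublyStochastic hW
  have hcol : ∀ j, ∑ i, W i j = 1 := sum_col_of_mem_doublyStochastic hW
  have hnR : (0 : ℝ) < (n : ℝ) := by exact_mod_cast hn
  -- the average row
  set a : ℕ → Fin d → ℝ := fun k j => (∑ i, X k i j) / n with ha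
  -- the deviation from the average
  set Y : ℕ → Matrix (Fin n) (Fin d) ℝ :=
    fun k => Matrix.of (fun i j => X k i j - a k j) with hY
  -- column sums of X after one step
  have hsum : ∀ k j, ∑ i, X (k + 1) i j =
      (1 - γ) * (∑ i, X k i j) + γ * n * xl k j := by
    intro k j
    simp only [hdyn k, Matrix.add_apply, Matrix.smul_apply, Matrix.of_apply, smul_eq_mul,
      Matrix.mul_apply, Finset.sum_add_distrib, ← Finset.mul_sum]
    rw [Finset.sum_comm]
    simp_rw [← Finset.sum_mul, hcol]
    simp [Finset.sum_const, Finset.card_univ, mul_comm, mul_assoc]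
  -- recursion for the average
  have harec : ∀ k j, a (k + 1) j = (1 - γ) * a k j + γ * xl k j := by
    intro k j
    simp only [ha]
    rw [hsum k j]
    field_simp
  -- recursion for the deviation
  have hYrec : ∀ k, Y (k + 1) = (1 - γ) • (W * Y k) := by
    intro k
    ext i j
    have hWY : (W * Y k) i j = (W * X k) i j - a k j := by
      simp only [Matrix.mul_apply, hY, Matrix.of_apply, mul_sub, Finset.sum_sub_distrib,
        ← Finset.sum_mul, hrow]
      ring
    simp only [hY, Matrix.of_apply, Matrix.smul_apply, smul_eq_mul, hWY]
    rw [harec k j]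
    simp only [hdyn k, Matrix.add_apply, Matrix.smul_apply, Matrix.of_apply, smul_eq_mul]
    rw [show (W * of fun i j => X k i j - a k j) i j = (W * X k) i j - a k j from hWY]
    ring
  -- column sums of the deviation vanish
  have hYcol : ∀ k j, ∑ i, Y k i j = 0 := by
    intro k j
    simp only [hY, Matrix.of_apply, Finset.sum_sub_distrib, Finset.sum_const,
      Finset.card_univ, Fintype.card_fin, nsmul_eq_mul, ha]
    field_simp
    simp
  -- norm bound by induction
  have hYnorm : ∀ k, ‖Y k‖ ≤ ((1 - γ) * σ) ^ k * ‖Y 0‖ := by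
    intro k
    induction k with
    | zero => simp
    | succ k ih =>
      rw [hYrec k, norm_smul]
      have h1 : ‖W * Y k‖ ≤ σ * ‖Y k‖ := hσW (Y k) (hYcol k)
      have h2 : ‖(1 - γ)‖ = 1 - γ := by rw [Real.norm_eq_abs, abs_of_nonneg (by linarith)]
      rw [h2]
      calc (1 - γ) * ‖W * Y k‖ ≤ (1 - γ) * (σ * ‖Y k‖) := by
            apply mul_le_mul_of_nonneg_left h1 (by linarith)
        _ ≤ (1 - γ) * (σ * (((1 - γ) * σ) ^ k * ‖Y 0‖)) := by
            apply mul_le_mul_of_nonneg_left _ (by linarith)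
            exact mul_le_mul_of_nonneg_left ih (le_of_lt hσ0)
        _ = ((1 - γ) * σ) ^ (k + 1) * ‖Y 0‖ := by ring
  -- the norm of Y k tends to zero
  have hgeo : Tendsto (fun k => ((1 - γ) * σ) ^ k * ‖Y 0‖) atTop (nhds 0) := by
    have hc0 : (0 : ℝ) ≤ (1 - γ) * σ := by nlinarith
    have hc1 : (1 - γ) * σ < 1 := by nlinarith
    simpa using (tendsto_pow_atTop_nhds_zero_of_lt_one hc0 hc1).mul_const ‖Y 0‖
  -- entries of Y tend to zero
  have hYentry : ∀ i j, Tendsto (fun k => Y k i j) atTop (nhds 0) := by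
    intro i j
    rw [tendsto_iff_dist_tendsto_zero]
    refine squeeze_zero (fun k => dist_nonneg) (fun k => ?_) hgeo
    rw [Real.dist_eq, sub_zero]
    exact (entry_le_frobenius (Y k) i j).trans (hYnorm k)
  -- averages tend to xstar componentwise
  have haconv : ∀ j, Tendsto (fun k => a k j) atTop (nhds (xstar j)) := by
    intro j
    refine aux_tendsto (1 - γ) (xstar j) (by linarith) (by linarith)
      (fun k => a k j) (fun k => xl k j)
      (fun k => by
        show a (k + 1) j = (1 - γ) * a k j + (1 - (1 - γ)) * xl k j
        rw [harec k j]; ring) ?_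
    have : Tendsto (fun k => (EuclideanSpace.proj j : EuclideanSpace ℝ (Fin d) →L[ℝ] ℝ) (xl k))
        atTop (nhds ((EuclideanSpace.proj j : EuclideanSpace ℝ (Fin d) →L[ℝ] ℝ) xstar)) :=
      ((EuclideanSpace.proj j).continuous.tendsto xstar).comp hconv
    simpa using this
  -- conclude
  intro i
  have hX : ∀ j, Tendsto (fun k => X k i j) atTop (nhds (xstar j)) := by
    intro j
    have : (fun k => X k i j) = fun k => Y k i j + a k j := by
      funext k; simp [hY]
    rw [this]
    simpa using (hYentry i j).add (haconv j)
  have hpi : Tendsto (fun k => (fun j => X k i j : Fin d → ℝ)) atTop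
      (nhds (fun j => xstar j)) := by
    rw [tendsto_pi_nhds]
    exact hX
  have hcont := ((PiLp.continuousLinearEquiv 2 ℝ (fun _ : Fin d => ℝ)).symm.continuous.tendsto
    (fun j => xstar j)).comp hpi
  exact hcont
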